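/- Fix γ ∈ (0,1). For each k, let x be a k-sparse random vector in ℝ^n (n ≥ k) whose k nonzero entries are i.i.d. standard normal N(0,1), let k₁ = ⌊γ k⌋, and let K₁ be a k₁-support of x. Then for every sufficiently small ε > 0, P(| ‖x_{K̄₁}‖₁ / ‖x‖₁ − (1 − exp(−Ψ(γ/2)²/2)) | > ε) → 0 as k → ∞. -/

import Mathlib

open Finset MeasureTheory ProbabilityTheory Filter Real Set NNReal ENNReal

section Aux

/-- The standard Gaussian upper tail function `Q`. -/
noncomputable def gaussQ (x : ℝ) : ℝ :=
  (Real.sqrt (2 * Real.pi))⁻¹ * ∫ y in Set.Ioi x, Real.exp (-(y ^ 2) / 2)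

noncomputable def ftr (t : ℝ) : ℝ → ℝ := fun y => if t < |y| then |y| else 0
noncomputable def htr (t : ℝ) : ℝ → ℝ := fun y => if t < |y| then 1 else 0
noncomputable def mfun (t : ℝ) : ℝ := 2 * (Real.sqrt (2 * Real.pi))⁻¹ * Real.exp (-(t ^ 2) / 2)

lemma ftr_meas (t : ℝ) : Measurable (ftr t) :=
  Measurable.ite (measurableSet_lt measurable_const measurable_abs) measurable_abs measurable_const

lemma htr_meas (t : ℝ) : Measurable (htr t) :=
  Measurable.ite (measurableSet_lt measurable_const measurable_abs) measurable_const
    measurable_const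

lemma pdf01 (y : ℝ) : gaussianPDFReal 0 1 y = (Real.sqrt (2 * π))⁻¹ * Real.exp (-(y ^ 2) / 2) := by
  simp [gaussianPDFReal]

lemma pdf01_nonneg (y : ℝ) : 0 ≤ gaussianPDFReal 0 1 y := gaussianPDFReal_nonneg 0 1 y

lemma nu_int (g : ℝ → ℝ) :
    ∫ y, g y ∂(gaussianReal 0 1) = ∫ y, gaussianPDFReal 0 1 y * g y := by
  rw [gaussianReal_of_var_ne_zero 0 one_ne_zero]
  have h : (gaussianPDF 0 1) = fun y => ((Real.toNNReal (gaussianPDFReal 0 1 y) : ℝ≥0) : ℝ≥0∞) :=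
    rfl
  rw [h, integral_withDensity_eq_integral_smul
    ((measurable_gaussianPDFReal 0 1).real_toNNReal) g]
  congr 1
  funext y
  simp [NNReal.smul_def, Real.coe_toNNReal _ (pdf01_nonneg y)]

lemma nu_integrable_iff (g : ℝ → ℝ) :
    Integrable g (gaussianReal 0 1) ↔ Integrable (fun y => gaussianPDFReal 0 1 y * g y) := by
  rw [gaussianReal_of_var_ne_zero 0 one_ne_zero]
  have h : (gaussianPDF 0 1) = fun y => ((Real.toNNReal (gaussianPDFReal 0 1 y) : ℝ≥0) : ℝ≥0∞) :=
    rfl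
  rw [h, integrable_withDensity_iff_integrable_smul
    ((measurable_gaussianPDFReal 0 1).real_toNNReal)]
  constructor <;> intro hh <;> apply hh.congr <;>
  · filter_upwards with y
    simp [NNReal.smul_def, Real.coe_toNNReal _ (pdf01_nonneg y)]

lemma exp_form : (fun y : ℝ => Real.exp (-(y ^ 2) / 2)) = fun y => Real.exp (-(1/2 : ℝ) * y ^ 2) := by
  funext y; ring_nf

lemma intexp : Integrable (fun y : ℝ => Real.exp (-(y ^ 2) / 2)) := by
  rw [exp_form]; exact integrable_exp_neg_mul_sq (by norm_num)

lemma intsqexp : Integrable (fun y : ℝ => y ^ 2 * Real.exp (-(y ^ 2) / 2)) := by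
  have h := integrable_rpow_mul_exp_neg_mul_sq (b := 1/2) (by norm_num) (s := 2) (by norm_num)
  have h2 : Integrable (fun y : ℝ => y ^ 2 * Real.exp (-(1/2 : ℝ) * y ^ 2)) := by
    apply h.congr
    filter_upwards with y
    rw [show ((2:ℝ)) = ((2:ℕ):ℝ) by norm_num, Real.rpow_natCast]
  apply h2.congr
  filter_upwards with y
  congr 1; ring_nf

lemma master_int : Integrable (fun y : ℝ => gaussianPDFReal 0 1 y * (y ^ 2 + 1)) := by
  have : (fun y : ℝ => gaussianPDFReal 0 1 y * (y ^ 2 + 1)) =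
      fun y => (Real.sqrt (2 * π))⁻¹ *
        (y ^ 2 * Real.exp (-(y ^ 2) / 2) + Real.exp (-(y ^ 2) / 2)) := by
    funext y; rw [pdf01]; ring
  rw [this]
  exact (intsqexp.add intexp).const_mul _

lemma master_nonneg (y : ℝ) : 0 ≤ gaussianPDFReal 0 1 y * (y ^ 2 + 1) :=
  mul_nonneg (pdf01_nonneg y) (by positivity)

lemma hasDeriv_negexp (y : ℝ) :
    HasDerivAt (fun z : ℝ => -Real.exp (-(z ^ 2) / 2)) (y * Real.exp (-(y ^ 2) / 2)) y := by
  have h1 : HasDerivAt (fun z : ℝ => -(z ^ 2) / 2) (-y) y := by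
    have := (hasDerivAt_pow 2 y).neg.div_const 2
    refine this.congr_deriv ?_
    norm_num
    ring
  have := (h1.exp).neg
  refine this.congr_deriv ?_
  ring

lemma tendsto_negexp : Filter.Tendsto (fun z : ℝ => -Real.exp (-(z ^ 2) / 2)) atTop (nhds 0) := by
  rw [show (0:ℝ) = -0 by ring]
  apply Filter.Tendsto.neg
  apply Real.tendsto_exp_atBot.comp
  have h2 : Filter.Tendsto (fun z : ℝ => z ^ 2) atTop atTop := tendsto_pow_atTop (by norm_num)
  have := (tendsto_neg_atTop_atBot.comp h2).atBot_div_const (show (0:ℝ) < 2 by norm_num)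
  simpa using this

lemma J_val {t : ℝ} (ht : 0 ≤ t) :
    ∫ y in Ioi t, y * Real.exp (-(y ^ 2) / 2) = Real.exp (-(t ^ 2) / 2) := by
  have hcont : ContinuousWithinAt (fun z : ℝ => -Real.exp (-(z ^ 2) / 2)) (Ici t) t :=
    (hasDeriv_negexp t).continuousAt.continuousWithinAt
  have := integral_Ioi_of_hasDerivAt_of_nonneg hcont
    (fun y _ => hasDeriv_negexp y)
    (fun y hy => mul_nonneg (le_trans ht (le_of_lt hy)) (Real.exp_pos _).le)
    tendsto_negexp
  rw [this]; ring

lemma even_split (F : ℝ → ℝ) (hF : Integrable F) (heven : ∀ y, F (-y) = F y) {t : ℝ}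
    (ht : 0 ≤ t) :
    ∫ y, Set.indicator (Iio (-t) ∪ Ioi t) F y = 2 * ∫ y in Ioi t, F y := by
  have hnt : -t ≤ t := le_trans (neg_nonpos.mpr ht) ht
  have hdisj : Disjoint (Iio (-t)) (Ioi t) :=
    (Set.Iio_disjoint_Ici le_rfl).mono_right
      ((Set.Ioi_subset_Ici_self).trans (Set.Ici_subset_Ici.mpr hnt))
  rw [integral_indicator (measurableSet_Iio.union measurableSet_Ioi),
    setIntegral_union hdisj measurableSet_Ioi hF.integrableOn hF.integrableOn]
  have h1 : ∫ y in Iio (-t), F y = ∫ y in Ioi t, F y := by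
    rw [setIntegral_congr_set Iio_ae_eq_Iic, ← integral_comp_neg_Ioi]
    congr 1; funext y; exact heven y
  rw [h1]; ring

lemma ind_eq (f : ℝ → ℝ) (t : ℝ) (y : ℝ) :
    gaussianPDFReal 0 1 y * (if t < |y| then f y else 0) =
      Set.indicator (Iio (-t) ∪ Ioi t) (fun y => gaussianPDFReal 0 1 y * f y) y := by
  have hmem : y ∈ Iio (-t) ∪ Ioi t ↔ t < |y| := by
    simp only [Set.mem_union, Set.mem_Iio, Set.mem_Ioi, lt_abs]
    constructor
    · rintro (h | h)
      · right; linarith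
      · left; exact h
    · rintro (h | h)
      · right; exact h
      · left; linarith
  by_cases h : t < |y|
  · rw [if_pos h, Set.indicator_of_mem (hmem.mpr h)]
  · rw [if_neg h, Set.indicator_of_notMem (fun hc => h (hmem.mp hc)), mul_zero]

lemma sqrt2pi_pos : 0 < Real.sqrt (2 * π) := Real.sqrt_pos.mpr (by positivity)

lemma pdf_abs_int : Integrable (fun y : ℝ => gaussianPDFReal 0 1 y * |y|) := by
  apply master_int.mono ((measurable_gaussianPDFReal 0 1).mul measurable_abs).aestronglyMeasurable
  filter_upwards with y
  rw [Real.norm_eq_abs, Pi.mul_apply, abs_of_nonneg (mul_nonneg (pdf01_nonneg y) (abs_nonneg y)),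
    Real.norm_eq_abs, abs_of_nonneg (master_nonneg y)]
  apply mul_le_mul_of_nonneg_left _ (pdf01_nonneg y)
  nlinarith [sq_nonneg (|y| - 1), sq_abs y, abs_nonneg y]

lemma ftr_int_eq {t : ℝ} (ht : 0 ≤ t) : ∫ y, ftr t y ∂(gaussianReal 0 1) = mfun t := by
  rw [nu_int]
  have h1 : (fun y => gaussianPDFReal 0 1 y * ftr t y) =
      fun y => Set.indicator (Iio (-t) ∪ Ioi t) (fun y => gaussianPDFReal 0 1 y * |y|) y := by
    funext y; exact ind_eq (fun y => |y|) t y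
  rw [h1, even_split _ pdf_abs_int (fun y => by
    rw [abs_neg]
    congr 1
    rw [pdf01, pdf01, neg_sq]) ht]
  have h2 : ∫ y in Ioi t, gaussianPDFReal 0 1 y * |y| =
      ∫ y in Ioi t, (Real.sqrt (2 * π))⁻¹ * (y * Real.exp (-(y ^ 2) / 2)) := by
    apply setIntegral_congr_fun measurableSet_Ioi
    intro y hy
    show gaussianPDFReal 0 1 y * |y| = _
    rw [pdf01, abs_of_nonneg (le_trans ht (le_of_lt hy))]
    ring
  rw [h2, integral_const_mul, J_val ht, mfun]
  ring

lemma htr_int_eq {t : ℝ} (ht : 0 ≤ t) :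
    ∫ y, htr t y ∂(gaussianReal 0 1) = 2 * gaussQ t := by
  rw [nu_int]
  have h1 : (fun y => gaussianPDFReal 0 1 y * htr t y) =
      fun y => Set.indicator (Iio (-t) ∪ Ioi t) (fun y => gaussianPDFReal 0 1 y * 1) y := by
    funext y; exact ind_eq (fun _ => 1) t y
  have hint : Integrable (fun y : ℝ => gaussianPDFReal 0 1 y * 1) := by
    simpa using integrable_gaussianPDFReal 0 1
  rw [h1, even_split _ hint (fun y => by
    simp only [mul_one]
    rw [pdf01, pdf01, neg_sq]) ht]
  have h2 : ∫ y in Ioi t, gaussianPDFReal 0 1 y * 1 =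
      ∫ y in Ioi t, (Real.sqrt (2 * π))⁻¹ * Real.exp (-(y ^ 2) / 2) := by
    apply setIntegral_congr_fun measurableSet_Ioi
    intro y _
    show gaussianPDFReal 0 1 y * 1 = _
    rw [pdf01]; ring
  rw [h2, integral_const_mul, gaussQ]

noncomputable def Cmom : ℝ := ∫ y, (y ^ 2 + 1) ∂(gaussianReal 0 1)

lemma sqint_nu : Integrable (fun y : ℝ => y ^ 2 + 1) (gaussianReal 0 1) := by
  rw [nu_integrable_iff]; exact master_int

lemma memL2_of_sq_le (f : ℝ → ℝ) (hm : Measurable f) (hb : ∀ y, (f y) ^ 2 ≤ y ^ 2 + 1) :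
    MemLp f 2 (gaussianReal 0 1) ∧ ∫ y, (f y) ^ 2 ∂(gaussianReal 0 1) ≤ Cmom := by
  have hint : Integrable (fun y => (f y) ^ 2) (gaussianReal 0 1) := by
    rw [nu_integrable_iff]
    apply master_int.mono ((measurable_gaussianPDFReal 0 1).mul (hm.pow_const 2)).aestronglyMeasurable
    filter_upwards with y
    rw [Real.norm_eq_abs, Pi.mul_apply, abs_of_nonneg (mul_nonneg (pdf01_nonneg y) (sq_nonneg _)),
      Real.norm_eq_abs, abs_of_nonneg (master_nonneg y)]
    exact mul_le_mul_of_nonneg_left (hb y) (pdf01_nonneg y)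
  constructor
  · rw [memLp_two_iff_integrable_sq hm.aestronglyMeasurable]
    exact hint
  · exact integral_mono hint sqint_nu hb

lemma ftr_sq_le (t : ℝ) (y : ℝ) : (ftr t y) ^ 2 ≤ y ^ 2 + 1 := by
  by_cases h : t < |y|
  · simp only [ftr, if_pos h, sq_abs]; linarith
  · simp only [ftr, if_neg h]; nlinarith [sq_nonneg y]

lemma htr_sq_le (t : ℝ) (y : ℝ) : (htr t y) ^ 2 ≤ y ^ 2 + 1 := by
  by_cases h : t < |y|
  · simp only [htr, if_pos h]; nlinarith [sq_nonneg y]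
  · simp only [htr, if_neg h]; nlinarith [sq_nonneg y]

lemma gaussQ_anti {s t : ℝ} (h : s < t) : gaussQ t < gaussQ s := by
  unfold gaussQ
  apply mul_lt_mul_of_pos_left _ (inv_pos.mpr sqrt2pi_pos)
  have hun : Ioc s t ∪ Ioi t = Ioi s := Set.Ioc_union_Ioi_eq_Ioi (le_of_lt h)
  have hdisj : Disjoint (Ioc s t) (Ioi t) := Set.Ioc_disjoint_Ioi le_rfl
  have hsplit : ∫ y in Ioi s, Real.exp (-(y ^ 2) / 2) =
      (∫ y in Ioc s t, Real.exp (-(y ^ 2) / 2)) + ∫ y in Ioi t, Real.exp (-(y ^ 2) / 2) := by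
    rw [← hun, setIntegral_union hdisj measurableSet_Ioi intexp.integrableOn intexp.integrableOn]
  rw [hsplit]
  have hpos : 0 < ∫ y in Ioc s t, Real.exp (-(y ^ 2) / 2) := by
    apply setIntegral_pos_iff_support_of_nonneg_ae ?_ intexp.integrableOn |>.mpr
    · have : Function.support (fun y : ℝ => Real.exp (-(y ^ 2) / 2)) = Set.univ := by
        ext y; simp [Function.mem_support, (Real.exp_pos _).ne']
      rw [this, Set.univ_inter, Real.volume_Ioc]
      simpa using h
    · filter_upwards with y using (Real.exp_pos _).le
  linarith

lemma gaussQ_zero : gaussQ 0 = 1 / 2 := by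
  unfold gaussQ
  have h1 : ∫ y in Ioi (0:ℝ), Real.exp (-(y ^ 2) / 2) =
      ∫ y in Ioi (0:ℝ), Real.exp (-(1/2 : ℝ) * y ^ 2) := by
    congr 1; funext y; ring_nf
  rw [h1, integral_gaussian_Ioi]
  rw [show π / (1/2 : ℝ) = 2 * π by ring]
  field_simp

lemma mfun_eq (t : ℝ) : mfun t = mfun 0 * Real.exp (-(t ^ 2) / 2) := by
  unfold mfun; simp

lemma mfun_zero_pos : 0 < mfun 0 := by
  unfold mfun
  have := sqrt2pi_pos
  positivity

lemma mfun_cont : Continuous mfun := by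
  unfold mfun
  continuity

lemma cheb {Ω : Type*} [MeasurableSpace Ω] (μ : Measure Ω) [IsProbabilityMeasure μ]
    {ι : Type*} (s : Finset ι) (X : ι → Ω → ℝ) (hm : ∀ i ∈ s, Measurable (X i))
    (hpair : ∀ i ∈ s, ∀ j ∈ s, i ≠ j → IndepFun (X i) (X j) μ)
    (hdist : ∀ i ∈ s, Measure.map (X i) μ = gaussianReal 0 1)
    (f : ℝ → ℝ) (hfm : Measurable f) (hf2 : MemLp f 2 (gaussianReal 0 1))
    (C : ℝ) (hC : ∫ y, (f y) ^ 2 ∂(gaussianReal 0 1) ≤ C)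
    {c : ℝ} (hc : 0 < c) :
    μ {ω | c ≤ |(∑ i ∈ s, f (X i ω)) - s.card * ∫ y, f y ∂(gaussianReal 0 1)|} ≤
      ENNReal.ofReal (s.card * C / c ^ 2) := by
  classical
  set ν := gaussianReal 0 1
  set Y : ι → Ω → ℝ := fun i ω => f (X i ω) with hY
  have hYL2 : ∀ i ∈ s, MemLp (Y i) 2 μ := by
    intro i hi
    have := (memLp_map_measure_iff (hfm.aestronglyMeasurable) (hm i hi).aemeasurable
      (p := 2) (μ := μ) (g := f)).mp (by rw [hdist i hi]; exact hf2)
    exact this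
  have hYmean : ∀ i ∈ s, μ[Y i] = ∫ y, f y ∂ν := by
    intro i hi
    rw [← hdist i hi, integral_map (hm i hi).aemeasurable]
    rw [hdist i hi]
    exact hfm.aestronglyMeasurable
  have hYvar : ∀ i ∈ s, variance (Y i) μ ≤ C := by
    intro i hi
    refine le_trans (variance_le_expectation_sq ((hfm.comp (hm i hi)).aestronglyMeasurable)) ?_
    have heq : μ[(Y i) ^ 2] = ∫ y, (f y) ^ 2 ∂ν := by
      rw [← hdist i hi, integral_map (hm i hi).aemeasurable]
      · rfl
      · rw [hdist i hi]
        exact (hfm.pow_const 2).aestronglyMeasurable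
    rw [heq]; exact hC
  have hsum : MemLp (∑ i ∈ s, Y i) 2 μ := memLp_finset_sum' s hYL2
  have hmean : μ[∑ i ∈ s, Y i] = s.card * ∫ y, f y ∂ν := by
    have h0 : ∫ x, (∑ i ∈ s, Y i) x ∂μ = ∫ x, ∑ i ∈ s, Y i x ∂μ := by
      congr 1; funext x; simp [Finset.sum_apply]
    rw [h0, integral_finset_sum s (fun i hi => (hYL2 i hi).integrable one_le_two)]
    rw [Finset.sum_congr rfl hYmean, Finset.sum_const, nsmul_eq_mul]
  have hvar : variance (∑ i ∈ s, Y i) μ ≤ s.card * C := by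
    rw [IndepFun.variance_sum hYL2 (fun i hi j hj hij =>
      (hpair i hi j hj hij).comp hfm hfm)]
    calc ∑ i ∈ s, variance (Y i) μ ≤ ∑ _i ∈ s, C := Finset.sum_le_sum hYvar
    _ = s.card * C := by rw [Finset.sum_const, nsmul_eq_mul]
  have hch := meas_ge_le_variance_div_sq (μ := μ) hsum hc
  calc μ {ω | c ≤ |(∑ i ∈ s, f (X i ω)) - s.card * ∫ y, f y ∂ν|}
      = μ {ω | c ≤ |(∑ i ∈ s, Y i) ω - μ[∑ i ∈ s, Y i]|} := by
        congr 1; ext ω; rw [hmean]; simp [Finset.sum_apply, Set.mem_setOf_eq, hY]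
    _ ≤ ENNReal.ofReal (variance (∑ i ∈ s, Y i) μ / c ^ 2) := hch
    _ ≤ ENNReal.ofReal (s.card * C / c ^ 2) := by
        apply ENNReal.ofReal_le_ofReal
        gcongr

end Aux

open Finset MeasureTheory ProbabilityTheory Filter

set_option maxHeartbeats 2000000 in

/-- For random `k`-sparse Gaussian vectors, with `k₁ = ⌊γk⌋` and `K₁` a `k₁`-support of `x`,
the ratio `‖x_{K̄₁}‖₁/‖x‖₁` concentrates around `1 − exp(−Ψ(γ/2)²/2)` as `k → ∞`. -/
theorem stmt6 (γ : ℝ) (hγ : γ ∈ Set.Ioo (0 : ℝ) 1)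
    (n : ℕ → ℕ) (hn : ∀ k, k ≤ n k)
    (Ω : ℕ → Type*) [∀ k, MeasurableSpace (Ω k)]
    (μ : ∀ k, Measure (Ω k)) [∀ k, IsProbabilityMeasure (μ k)]
    (x : ∀ k, Ω k → Fin (n k) → ℝ)
    (K : ∀ k, Finset (Fin (n k))) (hKcard : ∀ k, (K k).card = k)
    (hzero : ∀ k, ∀ ω, ∀ i ∉ K k, x k ω i = 0)
    (hnonzero : ∀ k, ∀ ω, ∀ i ∈ K k, x k ω i ≠ 0)
    (hmeas : ∀ k i, Measurable (fun ω => x k ω i))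
    (hindep : ∀ k, iIndepFun
      (fun (i : {i // i ∈ K k}) => fun ω => x k ω i.1) (μ k))
    (hdist : ∀ k, ∀ i ∈ K k, Measure.map (fun ω => x k ω i) (μ k) = gaussianReal 0 1)
    (K₁ : ∀ k, Ω k → Finset (Fin (n k)))
    (hK₁card : ∀ k ω, (K₁ k ω).card = ⌊γ * k⌋₊)
    (hK₁supp : ∀ k ω, ∀ i ∈ K₁ k ω, ∀ j ∉ K₁ k ω, |x k ω j| ≤ |x k ω i|)
    (a : ℝ) (ha : gaussQ a = γ / 2) :
    ∃ ε₀ > 0, ∀ ε : ℝ, 0 < ε → ε < ε₀ →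
      Tendsto
        (fun k => μ k {ω | |(∑ i ∈ (K₁ k ω)ᶜ, |x k ω i|) / (∑ i, |x k ω i|)
            - (1 - Real.exp (-(a ^ 2) / 2))| > ε})
        atTop (nhds 0) := by
  obtain ⟨hγ0, hγ1⟩ := hγ
  -- basic constants
  set q : ℝ := Real.exp (-(a ^ 2) / 2) with hq_def
  have hq0 : 0 < q := Real.exp_pos _
  have hq1 : q ≤ 1 := Real.exp_le_one_iff.mpr (by nlinarith [sq_nonneg a])
  have hapos : 0 < a := by
    by_contra h
    push_neg at h
    rcases eq_or_lt_of_le h with h0 | h0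
    · rw [h0, gaussQ_zero] at ha
      linarith
    · have := gaussQ_anti h0
      rw [ha, gaussQ_zero] at this
      linarith
  set m0 : ℝ := mfun 0 with hm0_def
  have hm0 : 0 < m0 := mfun_zero_pos
  have hma : mfun a = m0 * q := mfun_eq a
  have hCm0 : 0 ≤ Cmom := integral_nonneg (fun y => by positivity)
  set Cm : ℝ := max Cmom 1 with hCm_def
  have hCmpos : 0 < Cm := lt_of_lt_of_le one_pos (le_max_right _ _)
  have hCmle : Cmom ≤ Cm := le_max_left _ _
  refine ⟨1, one_pos, fun ε hε hε1 => ?_⟩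
  -- choose δ
  set δ : ℝ := min (m0 / 2) (ε * m0 / 7) with hδ_def
  have hδ : 0 < δ := lt_min (half_pos hm0) (div_pos (mul_pos hε hm0) (by norm_num))
  have hδm0 : δ ≤ m0 / 2 := min_le_left _ _
  have hδε : δ ≤ ε * m0 / 7 := min_le_right _ _
  -- choose η via continuity of mfun
  obtain ⟨r, hr, hball⟩ := Metric.continuousAt_iff.mp (mfun_cont.continuousAt (x := a)) δ hδ
  set η : ℝ := min a (r / 2) with hη_def
  have hη : 0 < η := lt_min hapos (half_pos hr)
  set b : ℝ := a + η with hb_def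
  set c : ℝ := a - η with hc_def
  have hb0 : (0:ℝ) ≤ b := by rw [hb_def]; linarith
  have hc0 : (0:ℝ) ≤ c := by
    have : η ≤ a := min_le_left _ _
    simp only [hc_def]; linarith
  have hmb : |mfun b - mfun a| ≤ δ := by
    have : dist b a < r := by
      rw [Real.dist_eq]
      have h1 : η ≤ r / 2 := min_le_right _ _
      rw [hb_def]
      rw [show a + η - a = η by ring, abs_of_pos hη]
      linarith
    have := hball this
    rw [Real.dist_eq] at this
    linarith
  have hmc : |mfun c - mfun a| ≤ δ := by
    have : dist c a < r := by
      rw [Real.dist_eq]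
      have h1 : η ≤ r / 2 := min_le_right _ _
      rw [hc_def, show a - η - a = -η by ring, abs_neg, abs_of_pos hη]
      linarith
    have := hball this
    rw [Real.dist_eq] at this
    linarith
  -- threshold probabilities
  set pb : ℝ := 2 * gaussQ b with hpb_def
  set pc : ℝ := 2 * gaussQ c with hpc_def
  have hpbγ : pb < γ := by
    have := gaussQ_anti (show a < b by rw [hb_def]; linarith)
    rw [ha] at this
    rw [hpb_def]; linarith
  have hpcγ : γ < pc := by
    have := gaussQ_anti (show c < a by rw [hc_def]; linarith)
    rw [ha] at this
    rw [hpc_def]; linarith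
  set δ₂ : ℝ := min ((γ - pb) / 2) (pc - γ) with hδ₂_def
  have hδ₂ : 0 < δ₂ := lt_min (by linarith) (by linarith)
  have hδ₂b : δ₂ ≤ (γ - pb) / 2 := min_le_left _ _
  have hδ₂c : δ₂ ≤ pc - γ := min_le_right _ _
  set δm : ℝ := min δ δ₂ with hδm_def
  have hδmpos : 0 < δm := lt_min hδ hδ₂
  have hδmδ : δm ≤ δ := min_le_left _ _
  have hδmδ₂ : δm ≤ δ₂ := min_le_right _ _
  -- the uniform Chebyshev bound
  have keybound : ∀ δ' : ℝ, δm ≤ δ' → ∀ k : ℕ, 1 ≤ k →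
      (k : ℝ) * Cmom / (δ' * k) ^ 2 ≤ Cm / (δm ^ 2 * k) := by
    intro δ' hle k hk
    have hkpos : (0:ℝ) < k := by exact_mod_cast hk
    have hδ'pos : 0 < δ' := lt_of_lt_of_le hδmpos hle
    rw [div_le_div_iff₀ (pow_pos (mul_pos hδ'pos hkpos) 2) (mul_pos (pow_pos hδmpos 2) hkpos)]
    have h1 : δm ^ 2 ≤ δ' ^ 2 := pow_le_pow_left₀ hδmpos.le hle 2
    have h2 : Cmom * δm ^ 2 ≤ Cm * δ' ^ 2 :=
      mul_le_mul hCmle h1 (by positivity) hCmpos.le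
    calc (k:ℝ) * Cmom * (δm ^ 2 * k) = (Cmom * δm ^ 2) * k ^ 2 := by ring
      _ ≤ (Cm * δ' ^ 2) * k ^ 2 := mul_le_mul_of_nonneg_right h2 (sq_nonneg _)
      _ = Cm * ((δ' * k) ^ 2) := by ring
  set k₀ : ℕ := max 1 ⌈(2:ℝ) / (γ - pb)⌉₊ with hk₀_def
  set Bnd : ℕ → ℝ≥0∞ := fun k => ENNReal.ofReal (Cm / (δm ^ 2 * k)) with hBnd_def
  -- the key estimate
  have key : ∀ k, k₀ ≤ k →
      μ k {ω | |(∑ i ∈ (K₁ k ω)ᶜ, |x k ω i|) / (∑ i, |x k ω i|)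
            - (1 - Real.exp (-(a ^ 2) / 2))| > ε} ≤ 5 * Bnd k := by
    intro k hk
    have hk1 : 1 ≤ k := le_trans (le_max_left _ _) hk
    have hkpos : (0:ℝ) < k := by exact_mod_cast hk1
    have hk2 : (2:ℝ) / (γ - pb) ≤ k := by
      have h1 : (⌈(2:ℝ) / (γ - pb)⌉₊ : ℝ) ≤ k := by
        exact_mod_cast le_trans (le_max_right 1 _) hk
      exact le_trans (Nat.le_ceil _) h1
    have hkgpb : (2:ℝ) ≤ k * (γ - pb) := by
      rw [div_le_iff₀ (by linarith)] at hk2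
      linarith [hk2]
    set X : Fin (n k) → Ω k → ℝ := fun i ω => x k ω i with hX_def
    have hXm : ∀ i ∈ K k, Measurable (X i) := fun i _ => hmeas k i
    have hXpair : ∀ i ∈ K k, ∀ j ∈ K k, i ≠ j → IndepFun (X i) (X j) (μ k) := by
      intro i hi j hj hij
      exact (hindep k).indepFun (i := ⟨i, hi⟩) (j := ⟨j, hj⟩)
        (fun h => hij (congrArg Subtype.val h))
    have hXdist : ∀ i ∈ K k, Measure.map (X i) (μ k) = gaussianReal 0 1 := fun i hi =>
      hdist k i hi
    -- five Chebyshev bounds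
    have hcheb : ∀ (f : ℝ → ℝ), Measurable f → MemLp f 2 (gaussianReal 0 1) →
        (∫ y, (f y) ^ 2 ∂(gaussianReal 0 1) ≤ Cmom) → ∀ δ' : ℝ, δm ≤ δ' →
        μ k {ω | δ' * k ≤ |(∑ i ∈ K k, f (X i ω)) - k * ∫ y, f y ∂(gaussianReal 0 1)|} ≤
          Bnd k := by
      intro f hfm hf2 hfC δ' hle
      have hδ'pos : 0 < δ' := lt_of_lt_of_le hδmpos hle
      have h := cheb (μ k) (K k) X hXm hXpair hXdist f hfm hf2 Cmom hfC
        (c := δ' * k) (mul_pos hδ'pos hkpos)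
      rw [hKcard k] at h
      refine le_trans h ?_
      exact ENNReal.ofReal_le_ofReal (keybound δ' hle k hk1)
    have hL2b := memL2_of_sq_le (ftr b) (ftr_meas b) (ftr_sq_le b)
    have hL2c := memL2_of_sq_le (ftr c) (ftr_meas c) (ftr_sq_le c)
    have hL20 := memL2_of_sq_le (ftr 0) (ftr_meas 0) (ftr_sq_le 0)
    have hL2hb := memL2_of_sq_le (htr b) (htr_meas b) (htr_sq_le b)
    have hL2hc := memL2_of_sq_le (htr c) (htr_meas c) (htr_sq_le c)
    have hB1 := hcheb (ftr 0) (ftr_meas 0) hL20.1 hL20.2 δ hδmδ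
    have hB2 := hcheb (ftr b) (ftr_meas b) hL2b.1 hL2b.2 δ hδmδ
    have hB3 := hcheb (ftr c) (ftr_meas c) hL2c.1 hL2c.2 δ hδmδ
    have hB4 := hcheb (htr b) (htr_meas b) hL2hb.1 hL2hb.2 δ₂ hδmδ₂
    have hB5 := hcheb (htr c) (htr_meas c) hL2hc.1 hL2hc.2 δ₂ hδmδ₂
    rw [ftr_int_eq le_rfl] at hB1
    rw [ftr_int_eq hb0] at hB2
    rw [ftr_int_eq hc0] at hB3
    rw [htr_int_eq hb0] at hB4
    rw [htr_int_eq hc0] at hB5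
    -- set inclusion
    set B1 := {ω | δ * k ≤ |(∑ i ∈ K k, ftr 0 (X i ω)) - k * mfun 0|} with hB1d
    set B2 := {ω | δ * k ≤ |(∑ i ∈ K k, ftr b (X i ω)) - k * mfun b|} with hB2d
    set B3 := {ω | δ * k ≤ |(∑ i ∈ K k, ftr c (X i ω)) - k * mfun c|} with hB3d
    set B4 := {ω | δ₂ * k ≤ |(∑ i ∈ K k, htr b (X i ω)) - k * (2 * gaussQ b)|} with hB4d
    set B5 := {ω | δ₂ * k ≤ |(∑ i ∈ K k, htr c (X i ω)) - k * (2 * gaussQ c)|} with hB5d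
    have hsub : {ω | |(∑ i ∈ (K₁ k ω)ᶜ, |x k ω i|) / (∑ i, |x k ω i|)
            - (1 - Real.exp (-(a ^ 2) / 2))| > ε} ⊆ B1 ∪ B2 ∪ B3 ∪ B4 ∪ B5 := by
      intro ω hω
      simp only [Set.mem_setOf_eq] at hω
      by_contra hno
      simp only [hB1d, hB2d, hB3d, hB4d, hB5d, Set.mem_union, Set.mem_setOf_eq, not_or,
        not_le] at hno
      obtain ⟨⟨⟨⟨h1, h2⟩, h3⟩, h4⟩, h5⟩ := hno
      -- notation
      set S : ℝ := ∑ i ∈ K k, |x k ω i| with hS_def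
      have hSf0 : (∑ i ∈ K k, ftr 0 (X i ω)) = S := by
        apply Finset.sum_congr rfl
        intro i hi
        simp only [ftr, hX_def]
        rw [if_pos (abs_pos.mpr (hnonzero k ω i hi))]
      rw [hSf0] at h1
      have hSu : (∑ i, |x k ω i|) = S := by
        rw [hS_def]
        exact (Finset.sum_subset (Finset.subset_univ _)
          (fun i _ hi => abs_eq_zero.mpr (hzero k ω i hi))).symm
      -- counts
      have hNb : (∑ i ∈ K k, htr b (X i ω)) =
          (((K k).filter (fun i => b < |x k ω i|)).card : ℝ) := by
        simp only [htr, hX_def]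
        rw [← Finset.sum_filter (fun i => b < |x k ω i|) (fun _ => (1:ℝ)), Finset.sum_const,
          nsmul_eq_mul, mul_one]
      have hNc : (∑ i ∈ K k, htr c (X i ω)) =
          (((K k).filter (fun i => c < |x k ω i|)).card : ℝ) := by
        simp only [htr, hX_def]
        rw [← Finset.sum_filter (fun i => c < |x k ω i|) (fun _ => (1:ℝ)), Finset.sum_const,
          nsmul_eq_mul, mul_one]
      rw [hNb] at h4
      rw [hNc] at h5
      rw [← hpb_def] at h4
      rw [← hpc_def] at h5
      set k₁ : ℕ := ⌊γ * k⌋₊ with hk₁_def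
      have hk₁γ : (k₁ : ℝ) ≤ γ * k := Nat.floor_le (le_of_lt (mul_pos hγ0 hkpos))
      have hγk : γ * k < k₁ + 1 := Nat.lt_floor_add_one _
      have hk₁k : k₁ < k := by
        have hgk : γ * (k:ℝ) < 1 * k := mul_lt_mul_of_pos_right hγ1 hkpos
        have : (k₁ : ℝ) < k := lt_of_le_of_lt hk₁γ (by linarith)
        exact_mod_cast this
      -- count bounds
      have hNbk₁ : ((K k).filter (fun i => b < |x k ω i|)).card < k₁ := by
        have h6 : (((K k).filter (fun i => b < |x k ω i|)).card : ℝ) < k * pb + δ₂ * k := by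
          cases' abs_lt.mp h4 with hl hr
          linarith
        have h7 : k * pb + δ₂ * k ≤ γ * k - 1 := by
          have h71 : δ₂ * k ≤ (γ - pb) / 2 * k := mul_le_mul_of_nonneg_right hδ₂b hkpos.le
          linarith
        have : (((K k).filter (fun i => b < |x k ω i|)).card : ℝ) < (k₁:ℝ) := by linarith
        exact_mod_cast this
      have hNck₁ : k₁ ≤ ((K k).filter (fun i => c < |x k ω i|)).card := by
        have h6 : k * pc - δ₂ * k < (((K k).filter (fun i => c < |x k ω i|)).card : ℝ) := by
          cases' abs_lt.mp h5 with hl hr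
          linarith
        have h7 : γ * k ≤ k * pc - δ₂ * k := by
          have h71 : δ₂ * k ≤ (pc - γ) * k := mul_le_mul_of_nonneg_right hδ₂c hkpos.le
          linarith
        have : (k₁ : ℝ) < (((K k).filter (fun i => c < |x k ω i|)).card : ℝ) + 1 := by
          linarith
        have := Nat.lt_add_one_iff.mp (by exact_mod_cast this)
        exact this
      -- K₁ ⊆ K
      have hK₁K : K₁ k ω ⊆ K k := by
        intro i hi
        by_contra hiK
        have hx0 : x k ω i = 0 := hzero k ω i hiK
        have hex : ∃ j ∈ K k, j ∉ K₁ k ω := by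
          by_contra hcon
          push_neg at hcon
          have hsub2 : K k ⊆ K₁ k ω := fun j hj => hcon j hj
          have := Finset.card_le_card hsub2
          rw [hKcard k, hK₁card k ω] at this
          omega
        obtain ⟨j, hjK, hjn⟩ := hex
        have := hK₁supp k ω i hi j hjn
        rw [hx0, abs_zero] at this
        exact hnonzero k ω j hjK (abs_eq_zero.mp (le_antisymm this (abs_nonneg _)))
      -- B ⊆ K₁ ⊆ C
      have hBsub : (K k).filter (fun i => b < |x k ω i|) ⊆ K₁ k ω := by
        intro i hiB
        by_contra hin
        obtain ⟨hiK, hib⟩ := Finset.mem_filter.mp hiB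
        have hins : insert i (K₁ k ω) ⊆ (K k).filter (fun i => b < |x k ω i|) := by
          intro j hj
          rcases Finset.mem_insert.mp hj with rfl | hj
          · exact hiB
          · refine Finset.mem_filter.mpr ⟨hK₁K hj, ?_⟩
            exact lt_of_lt_of_le hib (hK₁supp k ω j hj i hin)
        have := Finset.card_le_card hins
        rw [Finset.card_insert_of_notMem hin, hK₁card k ω] at this
        omega
      have hCsub : K₁ k ω ⊆ (K k).filter (fun i => c < |x k ω i|) := by
        intro i hi
        by_contra hin
        have hiK : i ∈ K k := hK₁K hi
        have hic : |x k ω i| ≤ c := by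
          by_contra hcc
          push_neg at hcc
          exact hin (Finset.mem_filter.mpr ⟨hiK, hcc⟩)
        have hers : (K k).filter (fun i => c < |x k ω i|) ⊆ (K₁ k ω).erase i := by
          intro j hj
          obtain ⟨hjK, hjc⟩ := Finset.mem_filter.mp hj
          refine Finset.mem_erase.mpr ⟨?_, ?_⟩
          · rintro rfl
            linarith
          · by_contra hjn
            exact absurd (le_trans (hK₁supp k ω i hi j hjn) hic) (not_le.mpr hjc)
        have := Finset.card_le_card hers
        rw [Finset.card_erase_of_mem hi, hK₁card k ω] at this
        omega
      -- sums over filters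
      set U : ℝ := ∑ i ∈ K₁ k ω, |x k ω i| with hU_def
      have hAb : (∑ i ∈ K k, ftr b (X i ω)) =
          ∑ i ∈ (K k).filter (fun i => b < |x k ω i|), |x k ω i| := by
        simp only [ftr, hX_def]
        rw [Finset.sum_filter]
      have hAc : (∑ i ∈ K k, ftr c (X i ω)) =
          ∑ i ∈ (K k).filter (fun i => c < |x k ω i|), |x k ω i| := by
        simp only [ftr, hX_def]
        rw [Finset.sum_filter]
      rw [hAb] at h2
      rw [hAc] at h3
      have hU1 : (∑ i ∈ (K k).filter (fun i => b < |x k ω i|), |x k ω i|) ≤ U :=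
        Finset.sum_le_sum_of_subset_of_nonneg hBsub (fun i _ _ => abs_nonneg _)
      have hU2 : U ≤ ∑ i ∈ (K k).filter (fun i => c < |x k ω i|), |x k ω i| :=
        Finset.sum_le_sum_of_subset_of_nonneg hCsub (fun i _ _ => abs_nonneg _)
      -- numeric bounds
      have hmfb : mfun a - δ ≤ mfun b := by
        cases' abs_le.mp hmb with hl hr; linarith
      have hmfc : mfun c ≤ mfun a + δ := by
        cases' abs_le.mp hmc with hl hr; linarith
      have hUlow : k * mfun a - 2 * δ * k ≤ U := by
        cases' abs_lt.mp h2 with hl hr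
        have h21 : (k:ℝ) * (mfun a - δ) ≤ k * mfun b := mul_le_mul_of_nonneg_left hmfb hkpos.le
        linarith
      have hUhigh : U ≤ k * mfun a + 2 * δ * k := by
        cases' abs_lt.mp h3 with hl hr
        have h31 : (k:ℝ) * mfun c ≤ k * (mfun a + δ) := mul_le_mul_of_nonneg_left hmfc hkpos.le
        linarith
      have hSlow : k * (m0 / 2) ≤ S := by
        cases' abs_lt.mp h1 with hl hr
        have h13 : (k:ℝ) * δ ≤ k * (m0 / 2) := mul_le_mul_of_nonneg_left hδm0 hkpos.le
        linarith
      have hSpos : 0 < S := lt_of_lt_of_le (mul_pos hkpos (half_pos hm0)) hSlow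
      -- final algebra
      have hT : (∑ i ∈ (K₁ k ω)ᶜ, |x k ω i|) = (∑ i, |x k ω i|) - U := by
        have := Finset.sum_compl_add_sum (K₁ k ω) (fun i => |x k ω i|)
        rw [hU_def]
        linarith
      rw [hT, hSu] at hω
      have hexpr : (S - U) / S - (1 - q) = (q * S - U) / S := by
        field_simp
        ring
      rw [hexpr] at hω
      have hnum : |q * S - U| ≤ 3 * δ * k := by
        have h8 : |k * m0 - S| ≤ δ * k := by
          cases' abs_lt.mp h1 with hl hr
          rw [abs_le]
          constructor <;> linarith
        have h9 : q * S - U = q * (S - k * m0) + (k * mfun a - U) := by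
          rw [hma]; ring
        rw [h9]
        have h10 : |q * (S - k * m0)| ≤ δ * k := by
          rw [abs_mul, abs_of_pos hq0]
          have h101 : |S - k * m0| ≤ δ * k := by rw [abs_sub_comm]; exact h8
          have h102 : q * |S - k * m0| ≤ q * (δ * k) :=
            mul_le_mul_of_nonneg_left h101 hq0.le
          have h103 : q * (δ * k) ≤ 1 * (δ * k) :=
            mul_le_mul_of_nonneg_right hq1 (mul_nonneg hδ.le hkpos.le)
          linarith
        have h11 : |k * mfun a - U| ≤ 2 * δ * k := by
          rw [abs_le]
          constructor <;> linarith
        calc |q * (S - k * m0) + (k * mfun a - U)| ≤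
            |q * (S - k * m0)| + |k * mfun a - U| := abs_add_le _ _
          _ ≤ 3 * δ * k := by linarith
      have habs : |(q * S - U) / S| ≤ (3 * δ * k) / S := by
        rw [abs_div, abs_of_pos hSpos]
        gcongr
      have hfinal : (3 * δ * k) / S ≤ 6 * δ / m0 := by
        rw [div_le_div_iff₀ hSpos hm0]
        have h14 : (6 * δ) * (k * (m0 / 2)) ≤ (6 * δ) * S :=
          mul_le_mul_of_nonneg_left hSlow (by linarith)
        linarith
      have : ε < 6 * δ / m0 := lt_of_lt_of_le (lt_of_lt_of_le hω habs) hfinal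
      have h12 : 6 * δ / m0 ≤ 6 * ε / 7 := by
        rw [div_le_iff₀ hm0]
        have h15 : (6:ℝ) * (ε * m0 / 7) = 6 * ε / 7 * m0 := by ring
        linarith
      linarith
    refine le_trans (measure_mono hsub) ?_
    refine le_trans (measure_union_le _ _) ?_
    refine le_trans (add_le_add (measure_union_le _ _) hB5) ?_
    refine le_trans (add_le_add (add_le_add (measure_union_le _ _) hB4) le_rfl) ?_
    refine le_trans (add_le_add (add_le_add (add_le_add (measure_union_le _ _) hB3) le_rfl)
      le_rfl) ?_
    refine le_trans (add_le_add (add_le_add (add_le_add (add_le_add hB1 hB2) le_rfl) le_rfl)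
      le_rfl) ?_
    apply le_of_eq
    ring
  -- conclusion by squeezing
  have htends : Tendsto (fun k : ℕ => 5 * Bnd k) atTop (nhds 0) := by
    have h1 : Tendsto (fun k : ℕ => Cm / δm ^ 2 / (k : ℝ)) atTop (nhds 0) :=
      tendsto_const_div_atTop_nhds_zero_nat _
    have h2 : Tendsto (fun k : ℕ => Bnd k) atTop (nhds 0) := by
      have h2' := ENNReal.tendsto_ofReal h1
      rw [ENNReal.ofReal_zero] at h2'
      apply h2'.congr
      intro k
      simp only [hBnd_def]
      rw [div_div]
    have h3 := ENNReal.Tendsto.const_mul h2 (Or.inr (by norm_num : (5:ℝ≥0∞) ≠ ⊤))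
    simpa using h3
  apply tendsto_of_tendsto_of_tendsto_of_le_of_le' tendsto_const_nhds htends
  · filter_upwards with k using zero_le
  · filter_upwards [eventually_ge_atTop k₀] with k hk using key k hk
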